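/- Generalized performance difference lemma (distribution form): for every (possibly nonstationary) stochastic policy π, every time-indexed baseline f = (f_t : S → ℝ)_{0 ≤ t ≤ H} with f_H ≡ 0, and every initial distribution d_0 ∈ PMF(S), E_{s∼d_0}[ V^π_0(s) ] − E_{s∼d_0}[ f_0(s) ] = Σ_{t=0}^{H−1} E_{s ∼ d^π_t}[ A^f_t(s, π) ]. -/

import Mathlib

open scoped BigOperators

/-- Expectation of a real-valued function under a probability mass function on a finite type. -/
noncomputable def pexp {α : Type*} [Fintype α] (p : PMF α) (f : α → ℝ) : ℝ :=
  ∑ a, (p a).toReal * f a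

lemma pexp_sub {α : Type*} [Fintype α] (p : PMF α) (g h : α → ℝ) :
    pexp p (fun a => g a - h a) = pexp p g - pexp p h := by
  simp [pexp, mul_sub, Finset.sum_sub_distrib]

lemma pexp_add {α : Type*} [Fintype α] (p : PMF α) (g h : α → ℝ) :
    pexp p (fun a => g a + h a) = pexp p g + pexp p h := by
  simp [pexp, mul_add, Finset.sum_add_distrib]

lemma pexp_const {α : Type*} [Fintype α] (p : PMF α) (c : ℝ) :
    pexp p (fun _ => c) = c := by
  have h1 : ∑ a, (p a).toReal = 1 := by
    rw [← ENNReal.toReal_sum (fun a _ => p.apply_ne_top a), ← tsum_fintype (L := SummationFilter.unconditional _), p.tsum_coe,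
      ENNReal.toReal_one]
  simp [pexp, ← Finset.sum_mul, h1]

lemma pexp_congr {α : Type*} [Fintype α] (p : PMF α) (g h : α → ℝ)
    (hg : ∀ a, g a = h a) : pexp p g = pexp p h := by
  simp only [pexp]; exact Finset.sum_congr rfl fun a _ => by rw [hg a]

lemma pexp_bind {α β : Type*} [Fintype α] [Fintype β] (p : PMF α) (q : α → PMF β) (g : β → ℝ) :
    pexp (p.bind q) g = pexp p (fun a => pexp (q a) g) := by
  simp only [pexp, PMF.bind_apply, tsum_fintype]
  have : ∀ b : β, (∑ a : α, p a * q a b).toReal * g b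
      = ∑ a : α, (p a).toReal * ((q a b).toReal * g b) := by
    intro b
    rw [ENNReal.toReal_sum (fun a _ => ENNReal.mul_ne_top (p.apply_ne_top a) ((q a).apply_ne_top b)),
      Finset.sum_mul]
    refine Finset.sum_congr rfl fun a _ => ?_
    rw [ENNReal.toReal_mul]; ring
  simp only [this, Finset.mul_sum]
  exact Finset.sum_comm

/-- Generalized performance difference lemma (distribution form):
for every (possibly nonstationary) stochastic policy `π`, every time-indexed baseline `f`
with `f H ≡ 0`, and every initial distribution `d₀`,
`E_{s∼d₀}[ V^π_0(s) ] − E_{s∼d₀}[ f_0(s) ] = Σ_{t=0}^{H−1} E_{s ∼ d^π_t}[ A^f_t(s, π) ]`. -/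
theorem generalized_performance_difference_distribution
    {S A : Type*} [Fintype S] [Nonempty S] [Fintype A] [Nonempty A]
    (P : S → A → PMF S) (r : S → A → ℝ)
    (hr : ∀ s a, 0 ≤ r s a ∧ r s a ≤ 1)
    (H : ℕ)
    (π : ℕ → S → PMF A)
    (V : ℕ → S → ℝ)
    (hVH : ∀ s, V H s = 0)
    (hV : ∀ t, t < H → ∀ s,
      V t s = pexp (π t s) (fun a => r s a + pexp (P s a) (V (t + 1))))
    (f : ℕ → S → ℝ)
    (hfH : ∀ s, f H s = 0)
    (d₀ : PMF S)
    (d : ℕ → PMF S)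
    (hd0 : d 0 = d₀)
    (hd : ∀ t, d (t + 1) = (d t).bind fun s => (π t s).bind fun a => P s a) :
    pexp d₀ (fun s => V 0 s) - pexp d₀ (fun s => f 0 s) =
      ∑ t ∈ Finset.range H,
        pexp (d t) (fun s =>
          pexp (π t s) (fun a => r s a + pexp (P s a) (f (t + 1)) - f t s)) := by
  -- step lemma
  have step : ∀ t, t < H →
      pexp (d t) (fun s => V t s) - pexp (d t) (fun s => f t s) =
        pexp (d t) (fun s =>
          pexp (π t s) (fun a => r s a + pexp (P s a) (f (t + 1)) - f t s)) +
        (pexp (d (t+1)) (fun s => V (t+1) s) - pexp (d (t+1)) (fun s => f (t+1) s)) := by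
    intro t ht
    have hnext : pexp (d (t+1)) (fun s => V (t+1) s) - pexp (d (t+1)) (fun s => f (t+1) s)
        = pexp (d t) (fun s => pexp (π t s) (fun a =>
            pexp (P s a) (fun s' => V (t+1) s' - f (t+1) s'))) := by
      rw [← pexp_sub, hd t, pexp_bind]
      exact pexp_congr _ _ _ fun s => pexp_bind _ _ _
    rw [hnext]
    have key : ∀ s, V t s =
        pexp (π t s) (fun a => r s a + pexp (P s a) (f (t + 1)) - f t s) +
        pexp (π t s) (fun a => pexp (P s a) (fun s' => V (t+1) s' - f (t+1) s')) + f t s := by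
      intro s
      rw [hV t ht s, ← pexp_add]
      have := pexp_const (π t s) (f t s)
      calc pexp (π t s) (fun a => r s a + pexp (P s a) (V (t + 1)))
          = pexp (π t s) (fun a => (r s a + pexp (P s a) (f (t + 1)) - f t s +
              pexp (P s a) (fun s' => V (t+1) s' - f (t+1) s')) + f t s) := by
            refine pexp_congr _ _ _ fun a => ?_
            rw [pexp_sub]
            ring
        _ = _ := by rw [pexp_add, pexp_const]
    calc pexp (d t) (fun s => V t s) - pexp (d t) (fun s => f t s)
        = pexp (d t) (fun s => V t s - f t s) := by rw [pexp_sub]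
      _ = pexp (d t) (fun s =>
            pexp (π t s) (fun a => r s a + pexp (P s a) (f (t + 1)) - f t s) +
            pexp (π t s) (fun a => pexp (P s a) (fun s' => V (t+1) s' - f (t+1) s'))) := by
            refine pexp_congr _ _ _ fun s => ?_
            rw [key s]; ring
      _ = _ := by rw [pexp_add]
  have main : ∀ t, t ≤ H →
      pexp d₀ (fun s => V 0 s) - pexp d₀ (fun s => f 0 s) =
        (∑ i ∈ Finset.range t,
          pexp (d i) (fun s =>
            pexp (π i s) (fun a => r s a + pexp (P s a) (f (i + 1)) - f i s))) +
        (pexp (d t) (fun s => V t s) - pexp (d t) (fun s => f t s)) := by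
    intro t
    induction t with
    | zero => intro _; simp [hd0]
    | succ n ih =>
      intro h
      rw [ih (Nat.le_of_succ_le h), Finset.sum_range_succ, step n (Nat.lt_of_succ_le h)]
      ring
  have := main H le_rfl
  rw [this]
  have hVz : pexp (d H) (fun s => V H s) = 0 := by
    rw [pexp_congr (d H) _ (fun _ => (0:ℝ)) (fun s => hVH s), pexp_const]
  have hfz : pexp (d H) (fun s => f H s) = 0 := by
    rw [pexp_congr (d H) _ (fun _ => (0:ℝ)) (fun s => hfH s), pexp_const]
  rw [hVz, hfz]; ring
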